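/- Let T > 0 and let W^d be a standard d-dimensional Brownian motion on [0,T] for each d ∈ ℕ. Then for all d ∈ ℕ, 𝔭 ∈ [1,∞), and s ∈ [0,T], E[‖W^d_s‖^𝔭] ≤ 1 + (1 + 2T)^𝔭 (d/2 + 𝔭)^𝔭. -/

import Mathlib

open MeasureTheory ProbabilityTheory

open Real Finset
open scoped NNReal ENNReal

noncomputable def rr (x : ℝ) (m : ℕ) : ℝ := ∏ i ∈ Finset.range m, (x + 2 * i)

lemma rr_zero (x : ℝ) : rr x 0 = 1 := by simp [rr]

lemma rr_succ (x : ℝ) (m : ℕ) : rr x (m + 1) = rr x m * (x + 2 * m) := by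
  simp [rr, Finset.prod_range_succ]

lemma rr_nonneg {x : ℝ} (hx : 0 ≤ x) (m : ℕ) : 0 ≤ rr x m :=
  Finset.prod_nonneg fun i _ => by positivity

lemma vand (a c : ℝ) (k : ℕ) :
    ∑ j ∈ range (k + 1), (k.choose j : ℝ) * rr a j * rr c (k - j) = rr (a + c) k := by
  induction k with
  | zero => simp [rr]
  | succ k ih =>
    have h1 : ∀ j ∈ range (k + 1),
        (((k+1).choose (j+1) : ℝ) * rr a (j+1) * rr c (k+1-(j+1)))
          = (k.choose j : ℝ) * rr a (j+1) * rr c (k-j)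
            + (k.choose (j+1) : ℝ) * rr a (j+1) * rr c (k-j) := by
      intro j hj
      rw [Nat.succ_sub_succ, Nat.choose_succ_succ]
      push_cast
      ring
    have hg : ∑ j ∈ range (k+2), ((k.choose j : ℝ) * rr a j * rr c (k+1-j))
        = ∑ j ∈ range (k+1), ((k.choose (j+1) : ℝ) * rr a (j+1) * rr c (k-j))
          + rr c (k+1) := by
      rw [Finset.sum_range_succ' (fun j => (k.choose j : ℝ) * rr a j * rr c (k+1-j)) (k+1)]
      simp [Nat.succ_sub_succ, rr_zero]
    calc ∑ j ∈ range (k+1+1), (((k+1).choose j : ℝ) * rr a j * rr c (k+1-j))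
        = ∑ j ∈ range (k+1), (((k+1).choose (j+1) : ℝ) * rr a (j+1) * rr c (k+1-(j+1)))
            + ((k+1).choose 0 : ℝ) * rr a 0 * rr c (k+1-0) :=
          Finset.sum_range_succ' _ (k+1)
      _ = (∑ j ∈ range (k+1), (k.choose j : ℝ) * rr a (j+1) * rr c (k-j))
            + ((∑ j ∈ range (k+1), (k.choose (j+1) : ℝ) * rr a (j+1) * rr c (k-j))
              + rr c (k+1)) := by
          rw [Finset.sum_congr rfl h1, Finset.sum_add_distrib]
          simp [rr_zero]
          ring
      _ = (∑ j ∈ range (k+1), (k.choose j : ℝ) * rr a (j+1) * rr c (k-j))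
            + ∑ j ∈ range (k+2), ((k.choose j : ℝ) * rr a j * rr c (k+1-j)) := by rw [hg]
      _ = (∑ j ∈ range (k+1), (k.choose j : ℝ) * rr a (j+1) * rr c (k-j))
            + ∑ j ∈ range (k+1), ((k.choose j : ℝ) * rr a j * rr c (k+1-j)) := by
          rw [Finset.sum_range_succ (fun j => (k.choose j : ℝ) * rr a j * rr c (k+1-j)) (k+1)]
          simp [Nat.choose_succ_self]
      _ = ∑ j ∈ range (k+1), ((k.choose j : ℝ) * rr a j * rr c (k-j)) * (a + c + 2*k) := by
          rw [← Finset.sum_add_distrib]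
          refine Finset.sum_congr rfl fun j hj => ?_
          have hjk : j ≤ k := by simpa [Nat.lt_succ_iff] using hj
          have h2 : k + 1 - j = (k - j) + 1 := by omega
          rw [h2, rr_succ, rr_succ]
          have h3 : ((k - j : ℕ) : ℝ) = (k : ℝ) - j := by
            rw [Nat.cast_sub hjk]
          rw [h3]
          ring
      _ = rr (a + c) k * (a + c + 2*k) := by rw [← Finset.sum_mul, ih]
      _ = rr (a + c) (k+1) := (rr_succ _ _).symm

lemma myIntegrablePow {b : ℝ} (hb : 0 < b) (n : ℕ) :
    Integrable fun x : ℝ => x ^ n * Real.exp (-b * x ^ 2) := by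
  have h := integrable_rpow_mul_exp_neg_mul_sq hb (s := (n : ℝ))
    (by exact lt_of_lt_of_le (by norm_num) (Nat.cast_nonneg n))
  simpa [Real.rpow_natCast] using h

lemma myRec {b : ℝ} (hb : 0 < b) (n : ℕ) :
    ∫ x : ℝ, x ^ (n + 2) * Real.exp (-b * x ^ 2)
      = ((n + 1 : ℝ) / (2 * b)) * ∫ x : ℝ, x ^ n * Real.exp (-b * x ^ 2) := by
  have hderiv : ∀ x : ℝ, HasDerivAt (fun x : ℝ => x ^ (n + 1) * Real.exp (-b * x ^ 2))
      ((n + 1 : ℝ) * (x ^ n * Real.exp (-b * x ^ 2))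
        - (2 * b) * (x ^ (n + 2) * Real.exp (-b * x ^ 2))) x := by
    intro x
    have h1 : HasDerivAt (fun x : ℝ => x ^ (n + 1)) ((n + 1 : ℝ) * x ^ n) x := by
      simpa using hasDerivAt_pow (n + 1) x
    have h2 : HasDerivAt (fun x : ℝ => Real.exp (-b * x ^ 2))
        (Real.exp (-b * x ^ 2) * (-b * (2 * x))) x := by
      have h3 : HasDerivAt (fun x : ℝ => -b * x ^ 2) (-b * (2 * x)) x := by
        simpa using ((hasDerivAt_pow 2 x).const_mul (-b))
      exact h3.exp
    have := h1.mul h2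
    refine this.congr_deriv ?_
    ring
  have hint : Integrable (fun x : ℝ => (n + 1 : ℝ) * (x ^ n * Real.exp (-b * x ^ 2))
      - (2 * b) * (x ^ (n + 2) * Real.exp (-b * x ^ 2))) := by
    exact ((myIntegrablePow hb n).const_mul _).sub ((myIntegrablePow hb (n + 2)).const_mul _)
  have h0 := integral_eq_zero_of_hasDerivAt_of_integrable hderiv hint (myIntegrablePow hb (n + 1))
  rw [integral_sub (((myIntegrablePow hb n).const_mul _)) (((myIntegrablePow hb (n+2)).const_mul _)),
    integral_const_mul, integral_const_mul, sub_eq_zero] at h0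
  rw [div_mul_eq_mul_div, eq_div_iff (by positivity : (2*b) ≠ 0)]
  linarith [h0]

lemma gaussPDF_eq {v : ℝ≥0} (hv : v ≠ 0) (n : ℕ) :
    (fun x : ℝ => gaussianPDFReal 0 v x * x ^ n)
      = fun x : ℝ => (Real.sqrt (2 * π * v))⁻¹ * (x ^ n * Real.exp (-(2 * (v:ℝ))⁻¹ * x ^ 2)) := by
  funext x
  rw [gaussianPDFReal]
  have hAB : -(x - 0) ^ 2 / (2 * (v:ℝ)) = -(2 * (v:ℝ))⁻¹ * x ^ 2 := by ring
  rw [hAB]; ring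

lemma gauss_moment_int {v : ℝ≥0} (hv : v ≠ 0) (f : ℝ → ℝ) :
    ∫ x, f x ∂(gaussianReal 0 v) = ∫ x, gaussianPDFReal 0 v x * f x := by
  rw [gaussianReal_of_var_ne_zero 0 hv]
  have h : gaussianPDF 0 v = fun x => ((gaussianPDFReal 0 v x).toNNReal : ℝ≥0∞) := rfl
  rw [h, integral_withDensity_eq_integral_smul ((measurable_gaussianPDFReal 0 v).real_toNNReal)]
  congr 1
  funext x
  rw [NNReal.smul_def, Real.coe_toNNReal _ (gaussianPDFReal_nonneg 0 v x), smul_eq_mul]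

lemma gauss_even_moment {v : ℝ≥0} (hv : v ≠ 0) (k : ℕ) :
    ∫ x, x ^ (2 * k) ∂(gaussianReal 0 v)
      = (v : ℝ) ^ k * ∏ j ∈ range k, (2 * (j:ℝ) + 1) := by
  have hv' : 0 < (v : ℝ) := by positivity
  have hb : 0 < (2 * (v:ℝ))⁻¹ := by positivity
  set b : ℝ := (2 * (v:ℝ))⁻¹ with hbdef
  have hsq : 0 < Real.sqrt (2 * π * v) := Real.sqrt_pos.mpr (by positivity)
  have hJ : ∀ k : ℕ, ∫ x : ℝ, x ^ (2 * k) * Real.exp (-b * x ^ 2)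
      = Real.sqrt (2 * π * v) * ((v : ℝ) ^ k * ∏ j ∈ range k, (2 * (j:ℝ) + 1)) := by
    intro k
    induction k with
    | zero =>
      simp only [Nat.mul_zero, pow_zero, one_mul, prod_range_zero, mul_one]
      rw [integral_gaussian]
      congr 1
      rw [hbdef]
      field_simp
    | succ k ih =>
      have h2 : 2 * (k + 1) = 2 * k + 2 := by ring
      rw [h2, myRec hb (2 * k), ih, prod_range_succ]
      have hb2 : ((2 * k : ℕ) + 1 : ℝ) / (2 * b) = (2 * (k:ℝ) + 1) * (v:ℝ) := by
        rw [hbdef]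
        push_cast
        field_simp
      rw [hb2]
      push_cast
      ring
  rw [gauss_moment_int hv, show (fun x : ℝ => gaussianPDFReal 0 v x * x ^ (2*k)) = _ from gaussPDF_eq hv (2*k)]
  rw [integral_const_mul, hJ k, ← mul_assoc, inv_mul_cancel₀ hsq.ne', one_mul]

lemma gauss_integrable_pow {v : ℝ≥0} (hv : v ≠ 0) (n : ℕ) :
    Integrable (fun x => x ^ n) (gaussianReal 0 v) := by
  have hv' : 0 < (v : ℝ) := by positivity
  have hb : 0 < (2 * (v:ℝ))⁻¹ := by positivity
  rw [gaussianReal_of_var_ne_zero 0 hv,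
    show gaussianPDF 0 v = fun x => ((gaussianPDFReal 0 v x).toNNReal : ℝ≥0∞) from rfl,
    integrable_withDensity_iff_integrable_smul ((measurable_gaussianPDFReal 0 v).real_toNNReal)]
  have heq : (fun x : ℝ => (gaussianPDFReal 0 v x).toNNReal • x ^ n)
      = fun x : ℝ => (Real.sqrt (2 * π * v))⁻¹ * (x ^ n * Real.exp (-(2 * (v:ℝ))⁻¹ * x ^ 2)) := by
    have := gaussPDF_eq hv n
    funext x
    rw [NNReal.smul_def, Real.coe_toNNReal _ (gaussianPDFReal_nonneg 0 v x)]
    exact congrFun this x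
  rw [heq]
  exact (myIntegrablePow hb n).const_mul _

lemma gauss_even_moment' {v : ℝ≥0} (hv : v ≠ 0) (k : ℕ) :
    ∫ x, x ^ (2 * k) ∂(gaussianReal 0 v) = (v : ℝ) ^ k * rr 1 k := by
  rw [gauss_even_moment hv k]
  congr 1
  unfold rr
  exact Finset.prod_congr rfl fun i _ => by ring

lemma key {Ω : Type*} [MeasurableSpace Ω] {P : Measure Ω} [IsProbabilityMeasure P]
    {d : ℕ} {X : Fin d → Ω → ℝ} {v : ℝ≥0} (hv : v ≠ 0)
    (hmeas : ∀ i, Measurable (X i))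
    (hmap : ∀ i, P.map (X i) = gaussianReal 0 v)
    (hindep : iIndepFun X P)
    (F : Finset (Fin d)) :
    ∀ k : ℕ, Integrable (fun ω => (∑ i ∈ F, X i ω ^ 2) ^ k) P ∧
      ∫ ω, (∑ i ∈ F, X i ω ^ 2) ^ k ∂P ≤ (v : ℝ) ^ k * rr (F.card) k := by
  -- coordinate moments
  have hXint : ∀ (i : Fin d) (n : ℕ), Integrable (fun ω => X i ω ^ (2 * n)) P := by
    intro i n
    have hg : Integrable (fun x : ℝ => x ^ (2 * n)) (P.map (X i)) := by
      rw [hmap i]; exact gauss_integrable_pow hv (2 * n)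
    exact (integrable_map_measure hg.aestronglyMeasurable (hmeas i).aemeasurable).mp hg
  have hXmom : ∀ (i : Fin d) (n : ℕ),
      ∫ ω, X i ω ^ (2 * n) ∂P = (v : ℝ) ^ n * rr 1 n := by
    intro i n
    have h' : ∫ ω, X i ω ^ (2 * n) ∂P = ∫ x, x ^ (2 * n) ∂(P.map (X i)) :=
      (integral_map (hmeas i).aemeasurable
        (measurable_id.pow_const (2 * n)).aestronglyMeasurable).symm
    rw [h', hmap i, gauss_even_moment' hv]
  have hYmeas : ∀ i : Fin d, Measurable fun ω => X i ω ^ 2 :=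
    fun i => (hmeas i).pow_const 2
  have hindepY : iIndepFun
      (fun i ω => X i ω ^ 2) P :=
    hindep.comp (fun _ x => x ^ 2) (fun _ => measurable_id.pow_const 2)
  classical
  induction F using Finset.induction_on with
  | empty =>
    intro k
    constructor
    · simpa using integrable_const ((0:ℝ) ^ k)
    · simp only [Finset.sum_empty, Finset.card_empty, Nat.cast_zero, integral_const,
        measure_univ, ENNReal.toReal_one, one_smul, probReal_univ]
      cases k with
      | zero => simp [rr_zero]
      | succ k =>
        rw [zero_pow (Nat.succ_ne_zero k)]
        exact mul_nonneg (by positivity) (rr_nonneg le_rfl _)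
  | insert a F ha ih =>
    intro k
    set Q : Ω → ℝ := fun ω => ∑ i ∈ F, X i ω ^ 2 with hQ
    have hQnonneg : ∀ ω, 0 ≤ Q ω := fun ω => Finset.sum_nonneg fun i _ => sq_nonneg _
    have hsum_indep : IndepFun Q (fun ω => X a ω ^ 2) P := by
      have h := hindepY.indepFun_finsetSum_of_notMem hYmeas ha
      have : (∑ i ∈ F, fun ω => X i ω ^ 2) = Q := by
        funext ω; rw [Finset.sum_apply]
      rwa [this] at h
    have hterm_indep : ∀ j : ℕ, IndepFun (fun ω => Q ω ^ j)
        (fun ω => (X a ω ^ 2) ^ (k - j)) P := fun j =>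
      hsum_indep.comp (measurable_id.pow_const j) (measurable_id.pow_const (k - j))
    have hYaint : ∀ m : ℕ, Integrable (fun ω => (X a ω ^ 2) ^ m) P := by
      intro m
      have := hXint a m
      simpa [pow_mul] using this
    have hYamom : ∀ m : ℕ, ∫ ω, (X a ω ^ 2) ^ m ∂P = (v:ℝ) ^ m * rr 1 m := by
      intro m
      have := hXmom a m
      simpa [pow_mul] using this
    have hterm_int : ∀ j : ℕ, Integrable (fun ω => Q ω ^ j * (X a ω ^ 2) ^ (k - j)) P :=
      fun j => (hterm_indep j).integrable_mul (ih j).1 (hYaint (k - j))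
    have heq : (fun ω => (∑ i ∈ insert a F, X i ω ^ 2) ^ k)
        = fun ω => ∑ j ∈ range (k + 1),
            Q ω ^ j * (X a ω ^ 2) ^ (k - j) * (k.choose j : ℝ) := by
      funext ω
      rw [Finset.sum_insert ha, add_comm, add_pow]
    constructor
    · rw [heq]
      exact integrable_finset_sum _ fun j _ => (hterm_int j).mul_const _
    · rw [heq, integral_finset_sum _ fun j _ => (hterm_int j).mul_const _]
      have hbound : ∀ j ∈ range (k + 1),
          ∫ ω, Q ω ^ j * (X a ω ^ 2) ^ (k - j) * (k.choose j : ℝ) ∂P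
            ≤ (k.choose j : ℝ) * ((v:ℝ) ^ j * rr F.card j)
              * ((v:ℝ) ^ (k - j) * rr 1 (k - j)) := by
        intro j hj
        have hmul : ∫ ω, Q ω ^ j * (X a ω ^ 2) ^ (k - j) ∂P
            = (∫ ω, Q ω ^ j ∂P) * ∫ ω, (X a ω ^ 2) ^ (k - j) ∂P :=
          (hterm_indep j).integral_fun_mul_eq_mul_integral (ih j).1.aestronglyMeasurable (hYaint (k-j)).aestronglyMeasurable
        rw [integral_mul_const, hmul, hYamom (k - j)]
        have h1 : ∫ ω, Q ω ^ j ∂P ≤ (v:ℝ) ^ j * rr F.card j := (ih j).2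
        have h2 : (0:ℝ) ≤ (v:ℝ) ^ (k - j) * rr 1 (k - j) :=
          mul_nonneg (by positivity) (rr_nonneg one_pos.le _)
        calc (∫ ω, Q ω ^ j ∂P) * ((v:ℝ) ^ (k-j) * rr 1 (k-j)) * (k.choose j : ℝ)
            ≤ ((v:ℝ) ^ j * rr F.card j) * ((v:ℝ) ^ (k-j) * rr 1 (k-j)) * (k.choose j : ℝ) := by
              apply mul_le_mul_of_nonneg_right _ (Nat.cast_nonneg _)
              exact mul_le_mul_of_nonneg_right h1 h2
          _ = (k.choose j : ℝ) * ((v:ℝ) ^ j * rr F.card j) * ((v:ℝ) ^ (k-j) * rr 1 (k-j)) := by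
              ring
      refine le_trans (Finset.sum_le_sum hbound) ?_
      have hfinal : ∑ j ∈ range (k + 1),
          (k.choose j : ℝ) * ((v:ℝ) ^ j * rr F.card j) * ((v:ℝ) ^ (k-j) * rr 1 (k-j))
            = (v:ℝ) ^ k * rr ((insert a F).card) k := by
        rw [Finset.card_insert_of_notMem ha]
        push_cast
        rw [← vand (F.card) 1 k, Finset.mul_sum]
        refine Finset.sum_congr rfl fun j hj => ?_
        have hjk : j ≤ k := by simpa [Nat.lt_succ_iff] using hj
        have hvp : (v:ℝ) ^ j * (v:ℝ) ^ (k - j) = (v:ℝ) ^ k := by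
          rw [← pow_add]; congr 1; omega
        calc (k.choose j : ℝ) * ((v:ℝ) ^ j * rr F.card j) * ((v:ℝ) ^ (k-j) * rr 1 (k-j))
            = ((v:ℝ) ^ j * (v:ℝ) ^ (k-j)) * ((k.choose j : ℝ) * rr F.card j * rr 1 (k-j)) := by
              ring
          _ = (v:ℝ) ^ k * ((k.choose j : ℝ) * rr F.card j * rr 1 (k-j)) := by rw [hvp]
      rw [hfinal]

lemma rr_le_pow {x : ℝ} (hx : 0 ≤ x) (m : ℕ) : rr x m ≤ (x + 2 * m) ^ m := by
  unfold rr
  calc ∏ i ∈ range m, (x + 2 * i) ≤ ∏ _i ∈ range m, (x + 2 * m) := by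
        refine Finset.prod_le_prod (fun i _ => by positivity) (fun i hi => ?_)
        have : (i : ℝ) ≤ m := by
          have := (Finset.mem_range.mp hi).le
          exact_mod_cast this
        linarith
    _ = (x + 2 * m) ^ m := by rw [Finset.prod_const, Finset.card_range]


/-- `W` is a standard `d`-dimensional Brownian motion on the probability space `(Ω, P)`:
it starts at `0`, has continuous sample paths, is measurable at each time, its increments
over `[s, t]` (for `0 ≤ s ≤ t`) have independent coordinates, each distributed according
to a centered Gaussian with variance `t - s`, and it has independent increments. -/
def IsStdBrownianMotion {Ω : Type*} [MeasurableSpace Ω] (P : Measure Ω) (d : ℕ)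
    (W : ℝ → Ω → EuclideanSpace ℝ (Fin d)) : Prop :=
  (∀ ω, W 0 ω = 0) ∧
  (∀ ω, Continuous fun t => W t ω) ∧
  (∀ t : ℝ, Measurable (W t)) ∧
  (∀ s t : ℝ, 0 ≤ s → s ≤ t → ∀ i : Fin d,
    P.map (fun ω => W t ω i - W s ω i) = gaussianReal 0 (Real.toNNReal (t - s))) ∧
  (∀ s t : ℝ, 0 ≤ s → s ≤ t →
    iIndepFun
      (fun i ω => W t ω i - W s ω i) P) ∧
  (∀ (n : ℕ) (u : ℕ → ℝ), Monotone u → 0 ≤ u 0 →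
    iIndepFun
      (fun (j : Fin n) ω => W (u (j + 1)) ω - W (u j) ω) P)

theorem stmt_9 {Ω : Type*} [MeasurableSpace Ω] (P : Measure Ω) [IsProbabilityMeasure P]
    (T : ℝ) (hT : 0 < T) (W : (d : ℕ) → ℝ → Ω → EuclideanSpace ℝ (Fin d))
    (hW : ∀ d : ℕ, 0 < d → IsStdBrownianMotion P d (W d)) :
    ∀ d : ℕ, 0 < d → ∀ 𝔭 : ℝ, 1 ≤ 𝔭 → ∀ s ∈ Set.Icc (0 : ℝ) T,
      ∫ ω, ‖W d s ω‖ ^ 𝔭 ∂P ≤ 1 + (1 + 2 * T) ^ 𝔭 * ((d : ℝ) / 2 + 𝔭) ^ 𝔭 := by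
  intro d hd 𝔭 hp s hs
  obtain ⟨h0, -, hmeas, hmap, hindep, -⟩ := hW d hd
  have hp0 : (0:ℝ) < 𝔭 := lt_of_lt_of_le one_pos hp
  have hRHS0 : (0:ℝ) ≤ (1 + 2 * T) ^ 𝔭 * ((d : ℝ) / 2 + 𝔭) ^ 𝔭 := by positivity
  rcases eq_or_lt_of_le hs.1 with hs0 | hs0
  · -- s = 0
    have hfun : (fun ω => ‖W d s ω‖ ^ 𝔭) = fun _ : Ω => (0:ℝ) := by
      funext ω
      rw [← hs0, h0 ω, norm_zero, Real.zero_rpow hp0.ne']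
    rw [hfun, integral_const, smul_eq_mul, mul_zero]
    linarith
  · -- 0 < s
    set v : ℝ≥0 := Real.toNNReal s with hvdef
    have hv : v ≠ 0 := by
      simp only [hvdef, ne_eq, Real.toNNReal_eq_zero, not_le]
      exact hs0
    have hvr : (v : ℝ) = s := Real.coe_toNNReal s hs.1
    set X : Fin d → Ω → ℝ := fun i ω => W d s ω i with hXdef
    have hzero : ∀ (ω : Ω) (i : Fin d), W d 0 ω i = 0 := by
      intro ω i; rw [h0 ω]; rfl
    have hfun_eq : (fun (i : Fin d) (ω : Ω) => W d s ω i - W d 0 ω i) = X := by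
      funext i ω
      rw [hzero ω i, sub_zero]
    have hXmeas : ∀ i, Measurable (X i) := fun i => (measurable_pi_apply i).comp ((WithLp.measurable_ofLp 2 _).comp (hmeas s))
    have hXmap : ∀ i, P.map (X i) = gaussianReal 0 v := by
      intro i
      have h := hmap 0 s le_rfl hs.1 i
      rw [show (fun ω => W d s ω i - W d 0 ω i) = X i from congrFun hfun_eq i, sub_zero] at h
      exact h
    have hXindep : iIndepFun X P := by
      have h := hindep 0 s le_rfl hs.1
      rwa [hfun_eq] at h
    -- the exponent
    set K : ℕ := ⌈𝔭 / 2⌉₊ with hKdef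
    have hK1 : 1 ≤ K := Nat.one_le_ceil_iff.mpr (by positivity)
    have hKp : (K : ℝ) ≤ 𝔭 := by
      rcases le_or_gt 2 𝔭 with h2 | h2
      · have h1 : (K : ℝ) < 𝔭 / 2 + 1 :=
          Nat.ceil_lt_add_one (by positivity : (0:ℝ) ≤ 𝔭 / 2)
        linarith
      · have hK1' : K ≤ 1 := Nat.ceil_le.mpr (by push_cast; linarith)
        have : K = 1 := le_antisymm hK1' hK1
        rw [this]; push_cast; linarith
    have hpK : 𝔭 ≤ 2 * K := by
      have := Nat.le_ceil (𝔭 / 2)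
      rw [← hKdef] at this
      linarith
    obtain ⟨hQint, hQbound⟩ := key hv hXmeas hXmap hXindep Finset.univ K
    have hcard : ((Finset.univ : Finset (Fin d)).card : ℝ) = (d : ℝ) := by
      rw [Finset.card_univ, Fintype.card_fin]
    rw [hcard] at hQbound
    set Q : Ω → ℝ := fun ω => ∑ i ∈ Finset.univ, X i ω ^ 2 with hQdef
    have hQnonneg : ∀ ω, 0 ≤ Q ω := fun ω => Finset.sum_nonneg fun i _ => sq_nonneg _
    have hnormsq : ∀ ω, ‖W d s ω‖ ^ 2 = Q ω := by
      intro ω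
      rw [EuclideanSpace.norm_eq, Real.sq_sqrt (Finset.sum_nonneg fun i _ => by positivity)]
      exact Finset.sum_congr rfl fun i _ => by rw [Real.norm_eq_abs, sq_abs]
    have hpointwise : ∀ ω, ‖W d s ω‖ ^ 𝔭 ≤ 1 + Q ω ^ K := by
      intro ω
      have hxnn : (0:ℝ) ≤ ‖W d s ω‖ := norm_nonneg _
      have hQK : ‖W d s ω‖ ^ (2 * K) = Q ω ^ K := by
        rw [pow_mul, hnormsq ω]
      have hQKnn : 0 ≤ Q ω ^ K := pow_nonneg (hQnonneg ω) K
      rcases le_or_gt ‖W d s ω‖ 1 with hx1 | hx1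
      · have := Real.rpow_le_one hxnn hx1 hp0.le
        linarith
      · have h1 : ‖W d s ω‖ ^ 𝔭 ≤ ‖W d s ω‖ ^ ((2 * K : ℕ) : ℝ) := by
          apply Real.rpow_le_rpow_of_exponent_le hx1.le
          push_cast
          linarith
        rw [Real.rpow_natCast, hQK] at h1
        linarith
    -- integrability of the lhs
    have hmeasLHS : AEStronglyMeasurable (fun ω => ‖W d s ω‖ ^ 𝔭) P :=
      (((hmeas s).norm).pow_const 𝔭).aestronglyMeasurable
    have hgint : Integrable (fun ω => 1 + Q ω ^ K) P := (integrable_const 1).add hQint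
    have hLHSint : Integrable (fun ω => ‖W d s ω‖ ^ 𝔭) P := by
      refine hgint.mono' hmeasLHS (Filter.Eventually.of_forall fun ω => ?_)
      rw [Real.norm_of_nonneg (Real.rpow_nonneg (norm_nonneg _) _)]
      exact hpointwise ω
    have hstep1 : ∫ ω, ‖W d s ω‖ ^ 𝔭 ∂P ≤ 1 + ∫ ω, Q ω ^ K ∂P := by
      have h := integral_mono hLHSint hgint hpointwise
      rw [integral_add (integrable_const 1) hQint] at h
      simpa [measure_univ] using h
    -- final arithmetic
    have harith : (v:ℝ) ^ K * rr (d:ℝ) K ≤ (1 + 2 * T) ^ 𝔭 * ((d : ℝ) / 2 + 𝔭) ^ 𝔭 := by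
      have hd0 : (0:ℝ) ≤ (d:ℝ) := Nat.cast_nonneg d
      have h1 : rr (d:ℝ) K ≤ ((d:ℝ) + 2 * K) ^ K := rr_le_pow hd0 K
      have h2 : (v:ℝ) ^ K * rr (d:ℝ) K ≤ (s * ((d:ℝ) + 2 * K)) ^ K := by
        rw [mul_pow, hvr]
        apply mul_le_mul_of_nonneg_left h1 (by positivity)
      have h3 : s * ((d:ℝ) + 2 * K) ≤ (1 + 2 * T) * ((d:ℝ) / 2 + 𝔭) := by
        have : s * ((d:ℝ) + 2 * K) = (2 * s) * ((d:ℝ) / 2 + K) := by ring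
        rw [this]
        apply mul_le_mul (by linarith [hs.2]) (by linarith) (by positivity) (by linarith)
      have hA1 : (1:ℝ) ≤ (1 + 2 * T) * ((d:ℝ) / 2 + 𝔭) :=
        one_le_mul_of_one_le_of_one_le (by linarith) (by linarith [hd0])
      have h4 : (s * ((d:ℝ) + 2 * K)) ^ K ≤ ((1 + 2 * T) * ((d:ℝ) / 2 + 𝔭)) ^ K :=
        pow_le_pow_left₀ (by positivity) h3 K
      have h5 : ((1 + 2 * T) * ((d:ℝ) / 2 + 𝔭)) ^ K ≤ ((1 + 2 * T) * ((d:ℝ) / 2 + 𝔭)) ^ 𝔭 := by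
        rw [← Real.rpow_natCast ((1 + 2 * T) * ((d:ℝ) / 2 + 𝔭)) K]
        exact Real.rpow_le_rpow_of_exponent_le hA1 hKp
      have h6 : ((1 + 2 * T) * ((d:ℝ) / 2 + 𝔭)) ^ 𝔭 = (1 + 2 * T) ^ 𝔭 * ((d : ℝ) / 2 + 𝔭) ^ 𝔭 :=
        Real.mul_rpow (by linarith) (by linarith)
      calc (v:ℝ) ^ K * rr (d:ℝ) K ≤ (s * ((d:ℝ) + 2 * K)) ^ K := h2
        _ ≤ ((1 + 2 * T) * ((d:ℝ) / 2 + 𝔭)) ^ K := h4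
        _ ≤ ((1 + 2 * T) * ((d:ℝ) / 2 + 𝔭)) ^ 𝔭 := h5
        _ = _ := h6
    calc ∫ ω, ‖W d s ω‖ ^ 𝔭 ∂P ≤ 1 + ∫ ω, Q ω ^ K ∂P := hstep1
      _ ≤ 1 + (v:ℝ) ^ K * rr (d:ℝ) K := by linarith [hQbound]
      _ ≤ 1 + (1 + 2 * T) ^ 𝔭 * ((d : ℝ) / 2 + 𝔭) ^ 𝔭 := by linarith [harith]
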